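/- For every Borel probability measure μ on ℝ and every ε ∈ [0,1]: B^L(μ,ε) = B_ε^L(μ,ε) and B^P(μ,ε) = B_ε^P(μ,ε); that is, the closed ball of radius ε around μ for the Lévy (resp. Prokhorov) distance coincides with the closed ball of radius ε around μ for the modified Lévy (resp. modified Prokhorov) distance with parameter p = ε. -/

import Mathlib

open MeasureTheory Filter Set
open scoped ENNReal

/-- Call function `R_μ(x) = ∫ (y−x)⁺ μ(dy)`. -/
noncomputable def callFn (μ : Measure ℝ) (x : ℝ) : ℝ := ∫ y, max (y - x) 0 ∂μ

/-- Mean `Eμ = ∫ y μ(dy)`. -/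
noncomputable def meanM (μ : Measure ℝ) : ℝ := ∫ y, y ∂μ

/-- Distribution function `F_μ(x) = μ((−∞,x])`. -/
noncomputable def cdfM (μ : Measure ℝ) (x : ℝ) : ℝ := (μ (Set.Iic x)).toReal

/-- Membership in `M`: Borel probability measure on ℝ with finite first moment. -/
def MemM (μ : Measure ℝ) : Prop :=
  IsProbabilityMeasure μ ∧ Integrable (fun y => y) μ

/-- Convex order `μ ≤_c ν`. -/
def ConvexOrder (μ ν : Measure ℝ) : Prop :=
  ∀ φ : ℝ → ℝ, ConvexOn ℝ Set.univ φ → Integrable φ μ → Integrable φ ν →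
    ∫ y, φ y ∂μ ≤ ∫ y, φ y ∂ν

/-- Infinity Wasserstein distance via distribution functions, valued in `[0,∞]`,
with `inf ∅ = ∞`. -/
noncomputable def Winf (μ ν : Measure ℝ) : ℝ≥0∞ :=
  sInf (ENNReal.ofReal '' {ε : ℝ | 0 < ε ∧ ∀ x : ℝ,
    cdfM μ (x - ε) ≤ cdfM ν x ∧ cdfM ν x ≤ cdfM μ (x + ε)})

/-- Membership in the closed ball `B^∞(μ,ε)` (within `M`). -/
def InBallWinf (μ : Measure ℝ) (ε : ℝ) (ν : Measure ℝ) : Prop :=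
  MemM ν ∧ Winf μ ν ≤ ENNReal.ofReal ε

/-- `conv2 f g`: the largest convex function majorized by `min f g`, pointwise. -/
noncomputable def conv2 (f g : ℝ → ℝ) (x : ℝ) : ℝ :=
  sSup {z : ℝ | ∃ h : ℝ → ℝ, ConvexOn ℝ Set.univ h ∧ (∀ y, h y ≤ min (f y) (g y)) ∧ z = h x}

/-- `R^min_μ(x; m, ε)`. -/
noncomputable def RminW (μ : Measure ℝ) (m ε x : ℝ) : ℝ :=
  max (m + callFn μ (x - ε) - (meanM μ + ε)) (callFn μ (x + ε))

/-- `R^max_μ(x; m, ε)`. -/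
noncomputable def RmaxW (μ : Measure ℝ) (m ε x : ℝ) : ℝ :=
  conv2 (fun y => m + callFn μ (y + ε) - (meanM μ - ε)) (fun y => callFn μ (y - ε)) x

/-- Right derivative. -/
noncomputable def rderiv (f : ℝ → ℝ) (x : ℝ) : ℝ := derivWithin f (Set.Ioi x) x

/-- `R` is a call function: convex, nonincreasing, tending to `0` at `+∞`, and
`R(x)+x` has a finite limit at `−∞`. -/
def IsCallFn (R : ℝ → ℝ) : Prop :=
  ConvexOn ℝ Set.univ R ∧ Antitone R ∧
    Tendsto R atTop (nhds 0) ∧ ∃ c : ℝ, Tendsto (fun x => R x + x) atBot (nhds c)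

/-- Stop-loss distance, valued in `[0,∞]`. -/
noncomputable def dSL (μ ν : Measure ℝ) : ℝ≥0∞ :=
  ⨆ x : ℝ, ENNReal.ofReal |callFn μ x - callFn ν x|

/-- Lévy distance. -/
noncomputable def dLevy (μ ν : Measure ℝ) : ℝ≥0∞ :=
  sInf (ENNReal.ofReal '' {h : ℝ | 0 < h ∧ ∀ x : ℝ,
    cdfM μ (x - h) - h ≤ cdfM ν x ∧ cdfM ν x ≤ cdfM μ (x + h) + h})

/-- Prokhorov distance on ℝ. -/
noncomputable def dProk (μ ν : Measure ℝ) : ℝ≥0∞ :=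
  sInf (ENNReal.ofReal '' {h : ℝ | 0 < h ∧ ∀ A : Set ℝ, IsClosed A →
    ν A ≤ μ (Metric.cthickening h A) + ENNReal.ofReal h})

/-- Modified Lévy distance with parameter `p`. -/
noncomputable def dLevyMod (p : ℝ) (μ ν : Measure ℝ) : ℝ≥0∞ :=
  sInf (ENNReal.ofReal '' {h : ℝ | 0 < h ∧ ∀ x : ℝ,
    cdfM μ (x - h) - p ≤ cdfM ν x ∧ cdfM ν x ≤ cdfM μ (x + h) + p})

/-- Modified Prokhorov distance with parameter `p`. -/
noncomputable def dProkMod (p : ℝ) (μ ν : Measure ℝ) : ℝ≥0∞ :=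
  sInf (ENNReal.ofReal '' {h : ℝ | 0 < h ∧ ∀ A : Set ℝ, IsClosed A →
    ν A ≤ μ (Metric.cthickening h A) + ENNReal.ofReal p})
lemma cdfM_mono (μ : Measure ℝ) [IsFiniteMeasure μ] : Monotone (cdfM μ) := fun a b hab =>
  ENNReal.toReal_mono (measure_ne_top μ _) (measure_mono (Set.Iic_subset_Iic.2 hab))

lemma real_le_of_forall_pos (a b : ℝ) (h : ∀ t : ℝ, 0 < t → t ≤ 1 → a ≤ b + t) : a ≤ b := by
  by_contra hc
  push_neg at hc
  have h1 := h (min ((a - b) / 2) 1) (lt_min (by linarith) one_pos) (min_le_right _ _)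
  have h2 : min ((a - b) / 2) 1 ≤ (a - b) / 2 := min_le_left _ _
  linarith

lemma key_iff (P : ℝ → Prop) (hmono : ∀ a b : ℝ, a ≤ b → 0 < a → P a → P b)
    (ε : ℝ) (hε : 0 ≤ ε) :
    sInf (ENNReal.ofReal '' {h : ℝ | 0 < h ∧ P h}) ≤ ENNReal.ofReal ε ↔
      ∀ h : ℝ, ε < h → P h := by
  constructor
  · intro hle h hh
    have h0 : 0 < h := lt_of_le_of_lt hε hh
    have hlt : sInf (ENNReal.ofReal '' {h : ℝ | 0 < h ∧ P h}) < ENNReal.ofReal h :=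
      lt_of_le_of_lt hle ((ENNReal.ofReal_lt_ofReal_iff h0).2 hh)
    obtain ⟨a, ⟨h', ⟨h'0, hPh'⟩, rfl⟩, ha⟩ := sInf_lt_iff.mp hlt
    exact hmono h' h ((ENNReal.ofReal_lt_ofReal_iff_of_nonneg h'0.le).mp ha).le h'0 hPh'
  · intro hP
    apply ENNReal.le_of_forall_pos_le_add
    intro δ hδ _
    have hmem : ENNReal.ofReal (ε + δ) ∈ ENNReal.ofReal '' {h : ℝ | 0 < h ∧ P h} :=
      ⟨ε + δ, ⟨by positivity, hP _ (by simpa using hδ)⟩, rfl⟩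
    calc sInf _ ≤ ENNReal.ofReal (ε + δ) := sInf_le hmem
    _ ≤ ENNReal.ofReal ε + δ := by
        rw [ENNReal.ofReal_add hε δ.coe_nonneg, ENNReal.ofReal_coe_nnreal]

lemma levy_iff (μ ν : Measure ℝ) [IsProbabilityMeasure μ] [IsProbabilityMeasure ν]
    {ε : ℝ} (hε : 0 ≤ ε) :
    dLevy μ ν ≤ ENNReal.ofReal ε ↔ dLevyMod ε μ ν ≤ ENNReal.ofReal ε := by
  rw [dLevy, dLevyMod, key_iff _ ?m1 ε hε, key_iff _ ?m2 ε hε]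
  case m1 =>
    intro a b hab _ hP x
    obtain ⟨h1, h2⟩ := hP x
    have e1 := cdfM_mono μ (show x - b ≤ x - a by linarith)
    have e2 := cdfM_mono μ (show x + a ≤ x + b by linarith)
    exact ⟨by linarith, by linarith⟩
  case m2 =>
    intro a b hab _ hP x
    obtain ⟨h1, h2⟩ := hP x
    have e1 := cdfM_mono μ (show x - b ≤ x - a by linarith)
    have e2 := cdfM_mono μ (show x + a ≤ x + b by linarith)
    exact ⟨by linarith, by linarith⟩
  constructor
  · intro H h hh x
    constructor
    · apply real_le_of_forall_pos
      intro t ht _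
      have hh' : ε < min h (ε + t) := lt_min hh (by linarith)
      obtain ⟨h1, _⟩ := H _ hh' x
      have e1 := cdfM_mono μ (show x - h ≤ x - min h (ε + t) by
        have := min_le_left h (ε + t); linarith)
      have e2 : min h (ε + t) ≤ ε + t := min_le_right _ _
      linarith
    · apply real_le_of_forall_pos
      intro t ht _
      have hh' : ε < min h (ε + t) := lt_min hh (by linarith)
      obtain ⟨_, h2⟩ := H _ hh' x
      have e1 := cdfM_mono μ (show x + min h (ε + t) ≤ x + h by
        have := min_le_left h (ε + t); linarith)
      have e2 : min h (ε + t) ≤ ε + t := min_le_right _ _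
      linarith
  · intro H h hh x
    obtain ⟨h1, h2⟩ := H h hh x
    exact ⟨by linarith, by linarith⟩

lemma prok_iff (μ ν : Measure ℝ) [IsProbabilityMeasure μ] [IsProbabilityMeasure ν]
    {ε : ℝ} (hε : 0 ≤ ε) :
    dProk μ ν ≤ ENNReal.ofReal ε ↔ dProkMod ε μ ν ≤ ENNReal.ofReal ε := by
  rw [dProk, dProkMod, key_iff _ ?m1 ε hε, key_iff _ ?m2 ε hε]
  case m1 =>
    intro a b hab _ hP A hA
    exact (hP A hA).trans (add_le_add
      (measure_mono (Metric.cthickening_mono hab A)) (ENNReal.ofReal_le_ofReal hab))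
  case m2 =>
    intro a b hab _ hP A hA
    exact (hP A hA).trans (add_le_add_left
      (measure_mono (Metric.cthickening_mono hab A)) _)
  constructor
  · intro H h hh A hA
    apply ENNReal.le_of_forall_pos_le_add
    intro δ hδ _
    have hδ' : (0 : ℝ) < δ := hδ
    have hh' : ε < min h (ε + δ) := lt_min hh (by linarith)
    calc ν A ≤ μ (Metric.cthickening (min h (ε + δ)) A) + ENNReal.ofReal (min h (ε + δ)) :=
          H _ hh' A hA
      _ ≤ μ (Metric.cthickening h A) + (ENNReal.ofReal ε + δ) := by
          refine add_le_add (measure_mono (Metric.cthickening_mono (min_le_left _ _) A)) ?_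
          calc ENNReal.ofReal (min h (ε + δ)) ≤ ENNReal.ofReal (ε + δ) :=
                ENNReal.ofReal_le_ofReal (min_le_right _ _)
            _ = ENNReal.ofReal ε + δ := by
                rw [ENNReal.ofReal_add hε δ.coe_nonneg, ENNReal.ofReal_coe_nnreal]
      _ = μ (Metric.cthickening h A) + ENNReal.ofReal ε + δ := (add_assoc _ _ _).symm
  · intro H h hh A hA
    exact (H h hh A hA).trans (add_le_add_right (ENNReal.ofReal_le_ofReal hh.le) _)
/-- for `ε ∈ [0,1]`, the closed `ε`-balls around `μ` for the Lévy
(resp. Prokhorov) distance coincide with those for the modified Lévy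
(resp. modified Prokhorov) distance with parameter `p = ε`. -/
theorem balls_eq_modified_balls (μ : Measure ℝ) [IsProbabilityMeasure μ]
    (ε : ℝ) (hε : ε ∈ Set.Icc (0:ℝ) 1) :
    ({ν : Measure ℝ | IsProbabilityMeasure ν ∧ dLevy μ ν ≤ ENNReal.ofReal ε}
      = {ν : Measure ℝ | IsProbabilityMeasure ν ∧ dLevyMod ε μ ν ≤ ENNReal.ofReal ε}) ∧
    ({ν : Measure ℝ | IsProbabilityMeasure ν ∧ dProk μ ν ≤ ENNReal.ofReal ε}
      = {ν : Measure ℝ | IsProbabilityMeasure ν ∧ dProkMod ε μ ν ≤ ENNReal.ofReal ε}) := by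
  obtain ⟨hε0, _⟩ := hε
  constructor
  · ext ν
    exact and_congr_right fun hν => by haveI := hν; exact levy_iff μ ν hε0
  · ext ν
    exact and_congr_right fun hν => by haveI := hν; exact prok_iff μ ν hε0
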